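/- For every odd integer n ≥ 3, the 2n×2n matrix 𝒜_n = diag(A_n, A_n) is symmetric and positive definite, and 𝒜_n⁻¹ ℬ_n is skew-symmetric, where ℬ_n = [[0, B_n],[B_n, 0]]. -/

import Mathlib

open Matrix

/-- The n×n circulant matrix with 1 on the diagonal and 1/2 on the (mod n)
super- and sub-diagonals. -/
noncomputable def matA (n : ℕ) [NeZero n] : Matrix (Fin n) (Fin n) ℝ :=
  fun i j => if j = i then 1 else if j = i + 1 ∨ j = i - 1 then (1 : ℝ)/2 else 0

/-- The n×n circulant central-difference matrix with 1 on the (mod n)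
super-diagonal and -1 on the (mod n) sub-diagonal. -/
def matB (n : ℕ) [NeZero n] : Matrix (Fin n) (Fin n) ℝ :=
  fun i j => if j = i + 1 then 1 else if j = i - 1 then -1 else 0

/-- The 2n×2n block-diagonal matrix diag(A, A). -/
noncomputable def calA (n : ℕ) [NeZero n] : Matrix (Fin n ⊕ Fin n) (Fin n ⊕ Fin n) ℝ :=
  Matrix.fromBlocks (matA n) 0 0 (matA n)

/-- The 2n×2n block matrix [[0, B],[B, 0]]. -/
def calB (n : ℕ) [NeZero n] : Matrix (Fin n ⊕ Fin n) (Fin n ⊕ Fin n) ℝ :=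
  Matrix.fromBlocks 0 (matB n) (matB n) 0



noncomputable def vecA (n : ℕ) [NeZero n] : Fin n → ℝ :=
  fun d => if d = 0 then 1 else if d = -1 ∨ d = 1 then (1 : ℝ)/2 else 0

lemma sub_eq_iff' {G} [AddCommGroup G] {i j c : G} : i - j = c ↔ j = i - c := by
  constructor
  · rintro rfl; abel
  · rintro rfl; abel

lemma matA_circ (n : ℕ) [NeZero n] : matA n = circulant (vecA n) := by
  ext i j
  simp only [matA, circulant_apply, vecA, sub_eq_iff', sub_zero, sub_neg_eq_add]


def vecB (n : ℕ) [NeZero n] : Fin n → ℝ :=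
  fun d => if d = -1 then 1 else if d = 1 then -1 else 0

lemma matB_circ (n : ℕ) [NeZero n] : matB n = circulant (vecB n) := by
  ext i j
  simp only [matB, circulant_apply, vecB, sub_eq_iff', sub_neg_eq_add]

open Fin.CommRing in
lemma two_ne (n : ℕ) [NeZero n] (hn : 3 ≤ n) : (2 : Fin n) ≠ 0 := by
  intro h
  have h2 : ((2 : ℕ) : Fin n) = 0 := by push_cast; exact h
  have hd := (Fin.natCast_eq_zero).mp h2
  exact absurd (Nat.le_of_dvd (by norm_num) hd) (by omega)

open Fin.CommRing in
lemma one_ne (n : ℕ) [NeZero n] (hn : 3 ≤ n) : (1 : Fin n) ≠ 0 := by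
  intro h
  have h2 : ((1 : ℕ) : Fin n) = 0 := by push_cast; exact h
  have hd := (Fin.natCast_eq_zero).mp h2
  exact absurd (Nat.le_of_dvd (by norm_num) hd) (by omega)

open Fin.CommRing in
lemma one_ne_neg_one (n : ℕ) [NeZero n] (hn : 3 ≤ n) : (1 : Fin n) ≠ -1 := by
  intro h
  apply two_ne n hn
  have h2 : (2 : Fin n) = 1 + 1 := by norm_num
  rw [h2]; nth_rewrite 1 [h]; exact neg_add_cancel 1

lemma vecA_even (n : ℕ) [NeZero n] (d : Fin n) : vecA n (-d) = vecA n d := by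
  simp only [vecA, neg_eq_iff_eq_neg, neg_neg, neg_zero, or_comm]

lemma vecB_odd (n : ℕ) [NeZero n] (hn : 3 ≤ n) (d : Fin n) : vecB n (-d) = -vecB n d := by
  have h1 := one_ne_neg_one n hn
  have h1' : (-1 : Fin n) ≠ 1 := fun he => h1 he.symm
  simp only [vecB, neg_eq_iff_eq_neg, neg_neg]
  by_cases h : d = 1
  · subst h; simp [h1, h1']
  · by_cases h2 : d = -1
    · subst h2; simp [h1, h1']
    · simp [h, h2]

open Fin.CommRing in
lemma mulVec_matA (n : ℕ) [NeZero n] (hn : 3 ≤ n) (x : Fin n → ℝ) (i : Fin n) :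
    (matA n *ᵥ x) i = x i + (1/2) * x (i+1) + (1/2) * x (i-1) := by
  have h1 := one_ne n hn
  have h2 := two_ne n hn
  have hii1 : i ≠ i + 1 := by
    intro h; exact h1 (left_eq_add.mp h)
  have hii2 : i ≠ i - 1 := by
    intro h
    apply h1
    have : i - (i - 1) = i - i := by rw [← h]
    simpa [sub_sub_cancel, sub_self] using this.symm
  have h12 : i + 1 ≠ i - 1 := by
    intro h
    apply h2
    have hh : (i+1) - (i-1) = (2 : Fin n) := by ring
    rw [h, sub_self] at hh
    exact hh.symm
  have key : ∀ j : Fin n, matA n i j * x j =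
      (if j = i then x j else 0) + ((if j = i + 1 then (1/2) * x j else 0)
        + (if j = i - 1 then (1/2) * x j else 0)) := by
    intro j
    simp only [matA]
    by_cases e1 : j = i
    · subst e1
      rw [if_pos rfl, if_pos rfl, if_neg hii1, if_neg hii2]; ring
    · rw [if_neg e1, if_neg e1]
      by_cases e2 : j = i + 1
      · subst e2
        rw [if_pos (Or.inl rfl), if_pos rfl, if_neg h12]; ring
      · rw [if_neg e2]
        by_cases e3 : j = i - 1
        · subst e3
          rw [if_pos (Or.inr rfl), if_pos rfl]; ring
        · rw [if_neg (by tauto), if_neg e3]; ring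
  rw [mulVec, dotProduct, Finset.sum_congr rfl (fun j _ => key j)]
  rw [Finset.sum_add_distrib, Finset.sum_add_distrib]
  simp only [Finset.sum_ite_eq', Finset.mem_univ, if_true]
  ring

lemma shift_sum (n : ℕ) [NeZero n] (f : Fin n → ℝ) : ∑ i, f (i + 1) = ∑ i, f i :=
  Fintype.sum_equiv (Equiv.addRight 1) _ _ (fun _ => rfl)

lemma quadform (n : ℕ) [NeZero n] (hn : 3 ≤ n) (x : Fin n → ℝ) :
    x ⬝ᵥ matA n *ᵥ x = (1/2) * ∑ i, (x i + x (i+1))^2 := by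
  have e2 : ∑ i, x i * x (i-1) = ∑ i, x (i+1) * x i := by
    rw [← shift_sum n (fun i => x i * x (i-1))]
    simp [add_sub_cancel_right]
  have e1 : ∑ i, x (i+1) * x (i+1) = ∑ i, x i * x i :=
    shift_sum n (fun i => x i * x i)
  calc x ⬝ᵥ matA n *ᵥ x
      = ∑ i, x i * (x i + (1/2) * x (i+1) + (1/2) * x (i-1)) := by
        simp only [dotProduct, mulVec_matA n hn x]
    _ = (∑ i, x i * x i) + (1/2) * (∑ i, x i * x (i+1)) + (1/2) * (∑ i, x i * x (i-1)) := by
        rw [Finset.mul_sum, Finset.mul_sum, ← Finset.sum_add_distrib, ← Finset.sum_add_distrib]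
        exact Finset.sum_congr rfl fun i _ => by ring
    _ = (∑ i, x i * x i) + (1/2) * (∑ i, x i * x (i+1)) + (1/2) * (∑ i, x (i+1) * x i) := by
        rw [e2]
    _ = (1/2) * ∑ i, (x i + x (i+1))^2 := by
        have hsq : ∑ i, (x i + x (i+1))^2 = ((∑ i, x i * x i) + (∑ i, x (i+1) * x (i+1)))
            + ((∑ i, x i * x (i+1)) + (∑ i, x (i+1) * x i)) := by
          rw [← Finset.sum_add_distrib, ← Finset.sum_add_distrib, ← Finset.sum_add_distrib]
          exact Finset.sum_congr rfl fun i _ => by ring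
        rw [hsq, e1]
        ring

lemma matA_quad_nonneg (n : ℕ) [NeZero n] (hn : 3 ≤ n) (x : Fin n → ℝ) :
    0 ≤ x ⬝ᵥ matA n *ᵥ x := by
  rw [quadform n hn]
  positivity

open Fin.CommRing in
lemma matA_quad_pos (n : ℕ) [NeZero n] (hn : 3 ≤ n) (hodd : Odd n) (x : Fin n → ℝ)
    (hx : x ≠ 0) : 0 < x ⬝ᵥ matA n *ᵥ x := by
  rw [quadform n hn]
  have hterm : ∀ i ∈ Finset.univ, (0:ℝ) ≤ (x i + x (i+1))^2 := fun i _ => sq_nonneg _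
  rcases eq_or_lt_of_le (Finset.sum_nonneg hterm) with h | h
  · exfalso
    have hall := (Finset.sum_eq_zero_iff_of_nonneg hterm).mp h.symm
    have hstep : ∀ i : Fin n, x (i+1) = -x i := fun i => by
      have h1 := hall i (Finset.mem_univ i)
      have h2 := pow_eq_zero_iff (n := 2) (by norm_num) |>.mp h1
      linarith
    have key : ∀ k : ℕ, x (k : Fin n) = (-1)^k * x 0 := by
      intro k
      induction k with
      | zero => simp
      | succ k ih =>
        have hc : ((k+1 : ℕ) : Fin n) = (k : Fin n) + 1 := by push_cast; ring
        rw [hc, hstep, ih]; ring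
    have h0 : x 0 = 0 := by
      have hk := key n
      rw [Fin.natCast_self, Odd.neg_one_pow hodd] at hk
      linarith
    apply hx
    funext i
    have hi := key i.val
    rw [Fin.cast_val_eq_self, h0, mul_zero] at hi
    exact hi
  · linarith



lemma calA_quad_split (n : ℕ) [NeZero n] (x : Fin n ⊕ Fin n → ℝ) :
    x ⬝ᵥ calA n *ᵥ x = (x ∘ Sum.inl) ⬝ᵥ matA n *ᵥ (x ∘ Sum.inl)
      + (x ∘ Sum.inr) ⬝ᵥ matA n *ᵥ (x ∘ Sum.inr) := by
  simp [calA, dotProduct, mulVec, Fintype.sum_sum_type, fromBlocks,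
    Finset.mul_sum, Function.comp]

lemma matA_transpose (n : ℕ) [NeZero n] : (matA n)ᵀ = matA n := by
  rw [matA_circ, transpose_circulant,
    show (fun i => vecA n (-i)) = vecA n from funext fun d => vecA_even n d]

lemma matB_transpose (n : ℕ) [NeZero n] (hn : 3 ≤ n) : (matB n)ᵀ = -(matB n) := by
  rw [matB_circ, transpose_circulant, ← circulant_neg,
    show (fun i => vecB n (-i)) = -vecB n from funext fun d => by
      rw [vecB_odd n hn d]; rfl]

lemma matAB_comm (n : ℕ) [NeZero n] : matA n * matB n = matB n * matA n := by
  rw [matA_circ, matB_circ]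
  exact circulant_mul_comm _ _

theorem calA_symm_posDef_and_calAinv_calB_skew (n : ℕ) [NeZero n]
    (hn : 3 ≤ n) (hodd : Odd n) :
    (calA n)ᵀ = calA n ∧
    (∀ x : Fin n ⊕ Fin n → ℝ, x ≠ 0 → 0 < x ⬝ᵥ (calA n) *ᵥ x) ∧
    ((calA n)⁻¹ * calB n)ᵀ = -((calA n)⁻¹ * calB n) := by
  have hAt : (calA n)ᵀ = calA n := by
    simp [calA, fromBlocks_transpose, matA_transpose]
  have hpos : ∀ x : Fin n ⊕ Fin n → ℝ, x ≠ 0 → 0 < x ⬝ᵥ (calA n) *ᵥ x := by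
    intro x hx
    rw [calA_quad_split]
    have hcase : (x ∘ Sum.inl) ≠ 0 ∨ (x ∘ Sum.inr) ≠ 0 := by
      by_contra hc
      push_neg at hc
      apply hx
      funext i
      cases i with
      | inl i => exact congrFun hc.1 i
      | inr i => exact congrFun hc.2 i
    rcases hcase with h | h
    · have := matA_quad_pos n hn hodd _ h
      have := matA_quad_nonneg n hn (x ∘ Sum.inr)
      linarith
    · have := matA_quad_pos n hn hodd _ h
      have := matA_quad_nonneg n hn (x ∘ Sum.inl)
      linarith
  refine ⟨hAt, hpos, ?_⟩
  have hpd : (calA n).PosDef := by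
    rw [posDef_iff_dotProduct_mulVec]
    constructor
    · show (calA n)ᴴ = calA n
      have : (calA n)ᴴ = (calA n)ᵀ := by
        ext i j; simp [conjTranspose_apply, transpose_apply]
      rw [this, hAt]
    · intro x hx
      have := hpos x hx
      simpa using this
  have hu : IsUnit (calA n).det := (Matrix.isUnit_iff_isUnit_det _).mp hpd.isUnit
  have hcomm : calA n * calB n = calB n * calA n := by
    simp [calA, calB, fromBlocks_multiply, matAB_comm]
  have hBt : (calB n)ᵀ = -(calB n) := by
    simp [calB, fromBlocks_transpose, matB_transpose n hn]
    ext i j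
    cases i <;> cases j <;> simp [fromBlocks, Matrix.neg_apply]
  have hinv : (calA n)⁻¹ * calB n = calB n * (calA n)⁻¹ := by
    have h1 := Matrix.nonsing_inv_mul (calA n) hu
    have h2 := Matrix.mul_nonsing_inv (calA n) hu
    calc (calA n)⁻¹ * calB n
        = (calA n)⁻¹ * calB n * (calA n * (calA n)⁻¹) := by rw [h2, Matrix.mul_one]
      _ = (calA n)⁻¹ * (calB n * calA n) * (calA n)⁻¹ := by
          simp only [Matrix.mul_assoc]
      _ = (calA n)⁻¹ * (calA n * calB n) * (calA n)⁻¹ := by rw [hcomm]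
      _ = calB n * (calA n)⁻¹ := by
          rw [← Matrix.mul_assoc, h1, Matrix.one_mul]
  rw [Matrix.transpose_mul, Matrix.transpose_nonsing_inv, hAt, hBt, Matrix.neg_mul, hinv]
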